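/- Let H₁ →^T H₂ →^S H₃ be a complex of closed densely defined operators between Hilbert spaces. Suppose every sequence g_ν ∈ Dom(T*) ∩ Dom(S) with ‖g_ν‖ bounded, T* g_ν → 0 and S g_ν → 0 admits a strongly convergent subsequence. Then Ker(T*) ∩ Ker(S) is finite dimensional, and there is a constant C > 0 such that ‖g‖² ≤ C²(‖T* g‖² + ‖S g‖²) for all g ∈ Dom(T*) ∩ Dom(S) orthogonal to Ker(T*) ∩ Ker(S); moreover Ker(S) = (Ker(T*) ∩ Ker(S)) ⊕ Im(T) as an orthogonal direct sum. -/

import Mathlib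

open scoped RealInnerProductSpace
open Filter

/-- The kernel `{x ∈ Dom T | T x = 0}` of a partially defined linear operator,
as a submodule of the source space. -/
def pKer {H H' : Type*} [NormedAddCommGroup H] [InnerProductSpace ℝ H]
    [NormedAddCommGroup H'] [InnerProductSpace ℝ H'] (T : H →ₗ.[ℝ] H') :
    Submodule ℝ H where
  carrier := {x | ∃ hx : x ∈ T.domain, T ⟨x, hx⟩ = 0}
  zero_mem' := ⟨T.domain.zero_mem, by
    have : (⟨0, T.domain.zero_mem⟩ : T.domain) = 0 := rfl
    rw [this, T.map_zero]⟩
  add_mem' := by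
    rintro a b ⟨ha, ea⟩ ⟨hb, eb⟩
    refine ⟨T.domain.add_mem ha hb, ?_⟩
    have : (⟨a + b, T.domain.add_mem ha hb⟩ : T.domain) = ⟨a, ha⟩ + ⟨b, hb⟩ := rfl
    rw [this, T.map_add, ea, eb, add_zero]
  smul_mem' := by
    rintro c a ⟨ha, ea⟩
    refine ⟨T.domain.smul_mem c ha, ?_⟩
    have : (⟨c • a, T.domain.smul_mem c ha⟩ : T.domain) = c • (⟨a, ha⟩ : T.domain) := rfl
    rw [this, T.map_smul, ea, smul_zero]

set_option linter.unusedSectionVars false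

section Aux
variable {H1 H2 H3 : Type*}
    [NormedAddCommGroup H1] [InnerProductSpace ℝ H1] [CompleteSpace H1]
    [NormedAddCommGroup H2] [InnerProductSpace ℝ H2] [CompleteSpace H2]
    [NormedAddCommGroup H3] [InnerProductSpace ℝ H3] [CompleteSpace H3]

/-- Sequential closedness of the adjoint. -/
theorem adj_seq_closed (T : H1 →ₗ.[ℝ] H2) (hTdense : Dense (T.domain : Set H1))
    (g : ℕ → H2) (hg : ∀ k, g k ∈ T.adjoint.domain) {x : H2} {y : H1}
    (hgx : Tendsto g atTop (nhds x))
    (hgy : Tendsto (fun k => T.adjoint ⟨g k, hg k⟩) atTop (nhds y)) :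
    ∃ hx : x ∈ T.adjoint.domain, T.adjoint ⟨x, hx⟩ = y := by
  have key : ∀ u : T.domain, ⟪y, (u : H1)⟫ = ⟪x, T u⟫ := by
    intro u
    have h1 : ∀ k, ⟪T.adjoint ⟨g k, hg k⟩, (u : H1)⟫ = ⟪g k, T u⟫ := fun k =>
      T.adjoint_isFormalAdjoint hTdense ⟨g k, hg k⟩ u
    have t1 : Tendsto (fun k => ⟪T.adjoint ⟨g k, hg k⟩, (u : H1)⟫) atTop (nhds ⟪y, (u : H1)⟫) :=
      hgy.inner tendsto_const_nhds
    have t2 : Tendsto (fun k => ⟪g k, T u⟫) atTop (nhds ⟪x, T u⟫) :=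
      hgx.inner tendsto_const_nhds
    exact tendsto_nhds_unique (by simpa only [h1] using t1) t2
  exact ⟨LinearPMap.mem_adjoint_domain_of_exists x ⟨y, key⟩,
    LinearPMap.adjoint_apply_eq hTdense _ key⟩

theorem pKer_adjoint_isClosed (T : H1 →ₗ.[ℝ] H2) (hTdense : Dense (T.domain : Set H1)) :
    IsClosed (pKer T.adjoint : Set H2) := by
  rw [← isSeqClosed_iff_isClosed]
  intro g x hgmem hgx
  obtain ⟨hx, hx0⟩ := adj_seq_closed T hTdense g (fun k => (hgmem k).1) hgx
    (by
      have : (fun k => T.adjoint ⟨g k, (hgmem k).1⟩) = fun _ => (0 : H1) := by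
        funext k; exact (hgmem k).2
      rw [this]; exact tendsto_const_nhds)
  exact ⟨hx, hx0⟩

theorem pKer_isClosed_of_graph (S : H2 →ₗ.[ℝ] H3)
    (hSclosed : IsClosed (S.graph : Set (H2 × H3))) :
    IsClosed (pKer S : Set H2) := by
  rw [← isSeqClosed_iff_isClosed]
  intro g x hgmem hgx
  have hmem : ∀ k, (g k, (0 : H3)) ∈ S.graph := by
    intro k
    rw [LinearPMap.mem_graph_iff]
    exact ⟨⟨g k, (hgmem k).1⟩, rfl, (hgmem k).2⟩
  have hlim : Tendsto (fun k => (g k, (0 : H3))) atTop (nhds (x, 0)) :=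
    hgx.prodMk_nhds tendsto_const_nhds
  have : (x, (0 : H3)) ∈ S.graph := hSclosed.mem_of_tendsto hlim
    (Filter.Eventually.of_forall hmem)
  rw [LinearPMap.mem_graph_iff] at this
  obtain ⟨⟨x', hx'⟩, h1, h2⟩ := this
  dsimp at h1 h2
  subst h1
  exact ⟨hx', h2⟩

end Aux
section Aux2
variable {H1 H2 H3 : Type*}
    [NormedAddCommGroup H1] [InnerProductSpace ℝ H1] [CompleteSpace H1]
    [NormedAddCommGroup H2] [InnerProductSpace ℝ H2] [CompleteSpace H2]
    [NormedAddCommGroup H3] [InnerProductSpace ℝ H3] [CompleteSpace H3]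

/-- Orthogonal complement of the range of `T` is the kernel of the adjoint. -/
theorem range_orth_eq_pKer_adjoint (T : H1 →ₗ.[ℝ] H2) (hTdense : Dense (T.domain : Set H1)) :
    (LinearMap.range T.toFun)ᗮ = pKer T.adjoint := by
  ext z
  rw [Submodule.mem_orthogonal]
  constructor
  · intro hz
    have key : ∀ u : T.domain, ⟪(0 : H1), (u : H1)⟫ = ⟪z, T u⟫ := by
      intro u
      rw [inner_zero_left]
      have := hz (T u) ⟨u, rfl⟩
      rw [real_inner_comm] at this
      exact this.symm
    exact ⟨LinearPMap.mem_adjoint_domain_of_exists z ⟨0, key⟩,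
      LinearPMap.adjoint_apply_eq hTdense _ key⟩
  · rintro ⟨hz, hz0⟩ y ⟨u, rfl⟩
    have := T.adjoint_isFormalAdjoint hTdense ⟨z, hz⟩ u
    rw [hz0, inner_zero_left] at this
    rw [real_inner_comm]
    exact this.symm

/-- `T** = T` in the needed direction: if `⟪u, T† y⟫ = ⟪h, y⟫` for all `y` in the
adjoint domain, then `u ∈ Dom T` and `T u = h`. -/
theorem mem_graph_of_forall_adjoint (T : H1 →ₗ.[ℝ] H2)
    (hTdense : Dense (T.domain : Set H1)) (hTclosed : IsClosed (T.graph : Set (H1 × H2)))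
    (u : H1) (h : H2)
    (hk : ∀ (y : H2) (hy : y ∈ T.adjoint.domain), ⟪u, T.adjoint ⟨y, hy⟩⟫ = ⟪h, y⟫) :
    ∃ hu : u ∈ T.domain, T ⟨u, hu⟩ = h := by
  set e := WithLp.prodContinuousLinearEquiv 2 ℝ H1 H2 with he
  set G : Submodule ℝ (WithLp 2 (H1 × H2)) :=
    T.graph.comap (e.toLinearEquiv : WithLp 2 (H1 × H2) →ₗ[ℝ] H1 × H2) with hG
  have hGclosed : IsClosed (G : Set (WithLp 2 (H1 × H2))) := by
    have : (G : Set (WithLp 2 (H1 × H2))) = e ⁻¹' (T.graph : Set (H1 × H2)) := rfl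
    rw [this]
    exact hTclosed.preimage e.continuous
  have hGG : Gᗮᗮ = G := by
    rw [Submodule.orthogonal_orthogonal_eq_closure]
    exact le_antisymm (Submodule.topologicalClosure_minimal G le_rfl hGclosed)
      (Submodule.le_topologicalClosure G)
  have hp : e.symm (u, h) ∈ Gᗮᗮ := by
    rw [Submodule.mem_orthogonal]
    intro w hw
    set a := (e w).1 with ha
    set b := (e w).2 with hb
    have hab : ∀ x : T.domain, ⟪a, (x : H1)⟫ + ⟪b, T x⟫ = 0 := by
      intro x
      have hmem : e.symm ((x : H1), T x) ∈ G := by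
        show e (e.symm _) ∈ T.graph
        rw [e.apply_symm_apply]
        exact T.mem_graph x
      have := (Submodule.mem_orthogonal G w).mp hw _ hmem
      rw [WithLp.prod_inner_apply] at this
      have h1 : (e.symm ((x : H1), T x)).ofLp.1 = (x : H1) := rfl
      have h2 : (e.symm ((x : H1), T x)).ofLp.2 = T x := rfl
      rw [h1, h2] at this
      calc ⟪a, (x:H1)⟫ + ⟪b, T x⟫ = ⟪(x:H1), a⟫ + ⟪T x, b⟫ := by
            rw [real_inner_comm a, real_inner_comm b]
        _ = 0 := by rw [← this]; rfl
    have hbmem : b ∈ T.adjoint.domain := by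
      refine LinearPMap.mem_adjoint_domain_of_exists b ⟨-a, fun x => ?_⟩
      have := hab x
      rw [inner_neg_left]
      linarith
    have hbval : T.adjoint ⟨b, hbmem⟩ = -a := by
      refine LinearPMap.adjoint_apply_eq hTdense _ fun x => ?_
      have := hab x
      rw [inner_neg_left]
      linarith
    have hinner : (inner ℝ w (e.symm (u, h)) : ℝ) = ⟪a, u⟫ + ⟪b, h⟫ := by
      rw [WithLp.prod_inner_apply]
      congr 1
    rw [hinner]
    have := hk b hbmem
    rw [hbval, inner_neg_right] at this
    have hcomm : ⟪a, u⟫ = -⟪h, b⟫ := by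
      rw [real_inner_comm] at this
      linarith [this]
    rw [hcomm, real_inner_comm b h]
    linarith
  rw [hGG] at hp
  have : (u, h) ∈ T.graph := by
    have : e (e.symm (u, h)) ∈ T.graph := hp
    rwa [e.apply_symm_apply] at this
  rw [LinearPMap.mem_graph_iff] at this
  obtain ⟨⟨u', hu'⟩, h1, h2⟩ := this
  dsimp at h1 h2
  subst h1
  exact ⟨hu', h2⟩

end Aux2
section Aux3
variable {H1 H2 H3 : Type*}
    [NormedAddCommGroup H1] [InnerProductSpace ℝ H1] [CompleteSpace H1]
    [NormedAddCommGroup H2] [InnerProductSpace ℝ H2] [CompleteSpace H2]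
    [NormedAddCommGroup H3] [InnerProductSpace ℝ H3] [CompleteSpace H3]

theorem mem_pKer_elim {H H' : Type*} [NormedAddCommGroup H] [InnerProductSpace ℝ H]
    [NormedAddCommGroup H'] [InnerProductSpace ℝ H'] {T : H →ₗ.[ℝ] H'} {x : H}
    (h : x ∈ pKer T) : ∃ hx : x ∈ T.domain, T ⟨x, hx⟩ = 0 := h

theorem mem_pKer_intro {H H' : Type*} [NormedAddCommGroup H] [InnerProductSpace ℝ H]
    [NormedAddCommGroup H'] [InnerProductSpace ℝ H'] {T : H →ₗ.[ℝ] H'} {x : H}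
    (hx : x ∈ T.domain) (h : T ⟨x, hx⟩ = 0) : x ∈ pKer T := ⟨hx, h⟩

theorem N_isClosed (T : H1 →ₗ.[ℝ] H2) (S : H2 →ₗ.[ℝ] H3)
    (hTdense : Dense (T.domain : Set H1)) (hSclosed : IsClosed (S.graph : Set (H2 × H3))) :
    IsClosed ((pKer T.adjoint ⊓ pKer S : Submodule ℝ H2) : Set H2) := by
  have : ((pKer T.adjoint ⊓ pKer S : Submodule ℝ H2) : Set H2)
      = (pKer T.adjoint : Set H2) ∩ (pKer S : Set H2) := rfl
  rw [this]
  exact (pKer_adjoint_isClosed T hTdense).inter (pKer_isClosed_of_graph S hSclosed)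

theorem part1 (T : H1 →ₗ.[ℝ] H2) (S : H2 →ₗ.[ℝ] H3)
    (hTdense : Dense (T.domain : Set H1)) (hSclosed : IsClosed (S.graph : Set (H2 × H3)))
    (hcpt : ∀ (g : ℕ → H2) (hgT : ∀ k, g k ∈ T.adjoint.domain)
      (hgS : ∀ k, g k ∈ S.domain),
      (∃ B, ∀ k, ‖g k‖ ≤ B) →
      Tendsto (fun k => T.adjoint ⟨g k, hgT k⟩) atTop (nhds 0) →
      Tendsto (fun k => S ⟨g k, hgS k⟩) atTop (nhds 0) →
      ∃ (φ : ℕ → ℕ) (x : H2), StrictMono φ ∧ Tendsto (g ∘ φ) atTop (nhds x)) :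
    FiniteDimensional ℝ (pKer T.adjoint ⊓ pKer S : Submodule ℝ H2) := by
  have hNclosed := N_isClosed T S hTdense hSclosed
  have hseq : IsSeqCompact
      (Metric.closedBall (0 : (pKer T.adjoint ⊓ pKer S : Submodule ℝ H2)) 1) := by
    intro f hf
    have hfT : ∀ k, ∃ h : (f k : H2) ∈ T.adjoint.domain, T.adjoint ⟨(f k : H2), h⟩ = 0 :=
      fun k => mem_pKer_elim (Submodule.mem_inf.mp (f k).2).1
    have hfS : ∀ k, ∃ h : (f k : H2) ∈ S.domain, S ⟨(f k : H2), h⟩ = 0 :=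
      fun k => mem_pKer_elim (Submodule.mem_inf.mp (f k).2).2
    have hbd : ∀ k, ‖(f k : H2)‖ ≤ 1 := fun k => by
      have := mem_closedBall_zero_iff.mp (hf k)
      rwa [Submodule.norm_coe]
    obtain ⟨φ, x, hφ, hx⟩ := hcpt (fun k => (f k : H2)) (fun k => (hfT k).choose)
      (fun k => (hfS k).choose) ⟨1, hbd⟩
      (by
        have : (fun k => T.adjoint ⟨(f k : H2), (hfT k).choose⟩) = fun _ => (0 : H1) := by
          funext k; exact (hfT k).choose_spec
        rw [this]; exact tendsto_const_nhds)
      (by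
        have : (fun k => S ⟨(f k : H2), (hfS k).choose⟩) = fun _ => (0 : H3) := by
          funext k; exact (hfS k).choose_spec
        rw [this]; exact tendsto_const_nhds)
    have hxN : x ∈ (pKer T.adjoint ⊓ pKer S : Submodule ℝ H2) := hNclosed.mem_of_tendsto hx
      (Filter.Eventually.of_forall fun k => (f (φ k)).2)
    refine ⟨⟨x, hxN⟩, ?_, φ, hφ, ?_⟩
    · rw [Metric.mem_closedBall, dist_zero_right]
      have hn : Tendsto (fun k => ‖(f (φ k) : H2)‖) atTop (nhds ‖x‖) := hx.norm
      have : ‖x‖ ≤ 1 := le_of_tendsto hn (Filter.Eventually.of_forall fun k => hbd (φ k))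
      rwa [← Submodule.norm_coe]
    · rw [tendsto_subtype_rng]
      exact hx
  exact FiniteDimensional.of_isCompact_closedBall₀ ℝ one_pos hseq.isCompact

end Aux3
section Aux4
variable {H1 H2 H3 : Type*}
    [NormedAddCommGroup H1] [InnerProductSpace ℝ H1] [CompleteSpace H1]
    [NormedAddCommGroup H2] [InnerProductSpace ℝ H2] [CompleteSpace H2]
    [NormedAddCommGroup H3] [InnerProductSpace ℝ H3] [CompleteSpace H3]

theorem pmap_smul_apply {H H' : Type*} [NormedAddCommGroup H] [InnerProductSpace ℝ H]
    [NormedAddCommGroup H'] [InnerProductSpace ℝ H'] (T : H →ₗ.[ℝ] H') (c : ℝ) {x : H}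
    (hx : x ∈ T.domain) (hcx : c • x ∈ T.domain) :
    T ⟨c • x, hcx⟩ = c • T ⟨x, hx⟩ := by
  have : (⟨c • x, hcx⟩ : T.domain) = c • (⟨x, hx⟩ : T.domain) := rfl
  rw [this, T.map_smul]

theorem arith_aux {a s K G : ℝ} (hG : 0 < G) (hK : 0 < K) (ha : 0 ≤ a)
    (h : K ^ 2 * (a ^ 2 + s ^ 2) < G ^ 2) : G⁻¹ * a ≤ 1 / K := by
  have hsq : (G⁻¹ * a * K) ^ 2 < 1 := by
    have h1 : (G⁻¹ * a * K) ^ 2 = G⁻¹ ^ 2 * (K ^ 2 * a ^ 2) := by ring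
    have h2 : K ^ 2 * a ^ 2 ≤ K ^ 2 * (a ^ 2 + s ^ 2) := by nlinarith [sq_nonneg s, sq_nonneg K]
    have h3 : G⁻¹ ^ 2 * (K ^ 2 * (a ^ 2 + s ^ 2)) < G⁻¹ ^ 2 * G ^ 2 := by
      apply mul_lt_mul_of_pos_left h
      positivity
    have h4 : G⁻¹ ^ 2 * G ^ 2 = 1 := by
      rw [← mul_pow, inv_mul_cancel₀ hG.ne', one_pow]
    calc (G⁻¹ * a * K) ^ 2 = G⁻¹ ^ 2 * (K ^ 2 * a ^ 2) := h1
      _ ≤ G⁻¹ ^ 2 * (K ^ 2 * (a ^ 2 + s ^ 2)) := by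
          apply mul_le_mul_of_nonneg_left h2; positivity
      _ < 1 := h4 ▸ h3
  have habs := abs_lt.mp ((sq_lt_one_iff_abs_lt_one _).mp hsq)
  rw [le_div_iff₀ hK]
  exact habs.2.le

theorem part2 (T : H1 →ₗ.[ℝ] H2) (S : H2 →ₗ.[ℝ] H3)
    (hTdense : Dense (T.domain : Set H1)) (hSclosed : IsClosed (S.graph : Set (H2 × H3)))
    (hcpt : ∀ (g : ℕ → H2) (hgT : ∀ k, g k ∈ T.adjoint.domain)
      (hgS : ∀ k, g k ∈ S.domain),
      (∃ B, ∀ k, ‖g k‖ ≤ B) →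
      Tendsto (fun k => T.adjoint ⟨g k, hgT k⟩) atTop (nhds 0) →
      Tendsto (fun k => S ⟨g k, hgS k⟩) atTop (nhds 0) →
      ∃ (φ : ℕ → ℕ) (x : H2), StrictMono φ ∧ Tendsto (g ∘ φ) atTop (nhds x)) :
    ∃ C > (0 : ℝ), ∀ (g : H2) (hg1 : g ∈ T.adjoint.domain) (hg2 : g ∈ S.domain),
      g ∈ (pKer T.adjoint ⊓ pKer S)ᗮ →
      ‖g‖ ^ 2 ≤ C ^ 2 * (‖T.adjoint ⟨g, hg1⟩‖ ^ 2 + ‖S ⟨g, hg2⟩‖ ^ 2) := by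
  by_contra hcon
  push_neg at hcon
  have hko : ∀ k : ℕ, (0:ℝ) < (k : ℝ) + 1 := fun k => by positivity
  choose g hg1 hg2 hgperp hgbig using fun k : ℕ => hcon ((k : ℝ) + 1) (hko k)
  have hgpos : ∀ k, (0:ℝ) < ‖g k‖ := by
    intro k
    have h := hgbig k
    have h0 : (0:ℝ) ≤ ((k:ℝ)+1) ^ 2 * (‖T.adjoint ⟨g k, hg1 k⟩‖ ^ 2 + ‖S ⟨g k, hg2 k⟩‖ ^ 2) := by
      positivity
    have h2 : (0:ℝ) < ‖g k‖ ^ 2 := lt_of_le_of_lt h0 h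
    nlinarith [norm_nonneg (g k)]
  set e : ℕ → H2 := fun k => ‖g k‖⁻¹ • g k with he
  have he1 : ∀ k, e k ∈ T.adjoint.domain := fun k =>
    T.adjoint.domain.smul_mem _ (hg1 k)
  have he2 : ∀ k, e k ∈ S.domain := fun k => S.domain.smul_mem _ (hg2 k)
  have henorm : ∀ k, ‖e k‖ = 1 := fun k => by
    rw [he]; simp only [norm_smul, norm_inv, norm_norm]
    exact inv_mul_cancel₀ (hgpos k).ne'
  have heT : ∀ k, ‖T.adjoint ⟨e k, he1 k⟩‖ ≤ 1 / ((k:ℝ)+1) := by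
    intro k
    rw [pmap_smul_apply T.adjoint _ (hg1 k) (he1 k), norm_smul, norm_inv, norm_norm]
    exact arith_aux (hgpos k) (hko k) (norm_nonneg _) (hgbig k)
  have heS : ∀ k, ‖S ⟨e k, he2 k⟩‖ ≤ 1 / ((k:ℝ)+1) := by
    intro k
    rw [pmap_smul_apply S _ (hg2 k) (he2 k), norm_smul, norm_inv, norm_norm]
    refine arith_aux (s := ‖T.adjoint ⟨g k, hg1 k⟩‖) (hgpos k) (hko k) (norm_nonneg _) ?_
    have := hgbig k
    linarith
  have hlim : Tendsto (fun k : ℕ => 1 / ((k:ℝ)+1)) atTop (nhds 0) :=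
    tendsto_one_div_add_atTop_nhds_zero_nat
  have hTlim : Tendsto (fun k => T.adjoint ⟨e k, he1 k⟩) atTop (nhds 0) := by
    rw [tendsto_zero_iff_norm_tendsto_zero]
    exact squeeze_zero (fun k => norm_nonneg _) heT hlim
  have hSlim : Tendsto (fun k => S ⟨e k, he2 k⟩) atTop (nhds 0) := by
    rw [tendsto_zero_iff_norm_tendsto_zero]
    exact squeeze_zero (fun k => norm_nonneg _) heS hlim
  obtain ⟨φ, x, hφ, hx⟩ := hcpt e he1 he2 ⟨1, fun k => (henorm k).le⟩ hTlim hSlim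
  have hxnorm : ‖x‖ = 1 := by
    have hn : Tendsto (fun k => ‖e (φ k)‖) atTop (nhds ‖x‖) := hx.norm
    have hc : (fun k => ‖e (φ k)‖) = fun _ => (1:ℝ) := by funext k; exact henorm (φ k)
    rw [hc] at hn
    exact tendsto_nhds_unique hn tendsto_const_nhds
  have hxT : x ∈ pKer T.adjoint := by
    obtain ⟨hxd, hx0⟩ := adj_seq_closed T hTdense (e ∘ φ) (fun k => he1 (φ k)) hx
      (hTlim.comp hφ.tendsto_atTop)
    exact mem_pKer_intro hxd hx0
  have hxS : x ∈ pKer S := by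
    have hmem : ∀ k, (e (φ k), S ⟨e (φ k), he2 (φ k)⟩) ∈ S.graph := by
      intro k
      exact S.mem_graph ⟨e (φ k), he2 (φ k)⟩
    have hlim2 : Tendsto (fun k => (e (φ k), S ⟨e (φ k), he2 (φ k)⟩)) atTop (nhds (x, 0)) :=
      hx.prodMk_nhds (hSlim.comp hφ.tendsto_atTop)
    have hmem2 : (x, (0:H3)) ∈ S.graph := hSclosed.mem_of_tendsto hlim2 (Filter.Eventually.of_forall hmem)
    rw [LinearPMap.mem_graph_iff] at hmem2
    obtain ⟨⟨x', hx'⟩, h1, h2⟩ := hmem2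
    dsimp at h1 h2
    subst h1
    exact mem_pKer_intro hx' h2
  have heperp : ∀ k, e k ∈ (pKer T.adjoint ⊓ pKer S)ᗮ := fun k =>
    Submodule.smul_mem _ _ (hgperp k)
  have hxperp : x ∈ (pKer T.adjoint ⊓ pKer S)ᗮ := by
    have hcl : IsClosed ((pKer T.adjoint ⊓ pKer S : Submodule ℝ H2)ᗮ : Set H2) :=
      Submodule.isClosed_orthogonal _
    exact hcl.mem_of_tendsto hx (Filter.Eventually.of_forall fun k => heperp (φ k))
  have hx0 : x = 0 := by
    have := (Submodule.mem_orthogonal _ x).mp hxperp x (Submodule.mem_inf.mpr ⟨hxT, hxS⟩)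
    exact inner_self_eq_zero.mp this
  rw [hx0, norm_zero] at hxnorm
  norm_num at hxnorm

end Aux4
section Aux5
variable {H1 H2 H3 : Type*}
    [NormedAddCommGroup H1] [InnerProductSpace ℝ H1] [CompleteSpace H1]
    [NormedAddCommGroup H2] [InnerProductSpace ℝ H2] [CompleteSpace H2]
    [NormedAddCommGroup H3] [InnerProductSpace ℝ H3] [CompleteSpace H3]

theorem pmap_sub_apply {H H' : Type*} [NormedAddCommGroup H] [InnerProductSpace ℝ H]
    [NormedAddCommGroup H'] [InnerProductSpace ℝ H'] (T : H →ₗ.[ℝ] H') {x y : H}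
    (hx : x ∈ T.domain) (hy : y ∈ T.domain) (hxy : x - y ∈ T.domain) :
    T ⟨x - y, hxy⟩ = T ⟨x, hx⟩ - T ⟨y, hy⟩ := by
  have : (⟨x - y, hxy⟩ : T.domain) = (⟨x, hx⟩ : T.domain) - ⟨y, hy⟩ := rfl
  rw [this]
  exact LinearMap.map_sub T.toFun _ _

/-- (B) orthogonal complement of `Ker S` is contained in `Ker T†`,
given `Im T ⊆ Ker S`. -/
theorem perpKerS_le_pKer_adjoint (T : H1 →ₗ.[ℝ] H2) (S : H2 →ₗ.[ℝ] H3)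
    (hTdense : Dense (T.domain : Set H1))
    (hrange : LinearMap.range T.toFun ≤ pKer S) :
    (pKer S)ᗮ ≤ pKer T.adjoint := by
  intro z hz
  rw [← range_orth_eq_pKer_adjoint T hTdense]
  exact Submodule.orthogonal_le hrange hz

/-- (C) the key bound `|⟪h, y⟫| ≤ C‖h‖‖T† y‖` for `h ∈ Ker S ∩ (Ker T†)ᗮ`. -/
theorem key_bound (T : H1 →ₗ.[ℝ] H2) (S : H2 →ₗ.[ℝ] H3)
    (hTdense : Dense (T.domain : Set H1)) (hSclosed : IsClosed (S.graph : Set (H2 × H3)))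
    (hrange : LinearMap.range T.toFun ≤ pKer S)
    {C : ℝ}
    (hest : ∀ (g : H2) (hg1 : g ∈ T.adjoint.domain) (hg2 : g ∈ S.domain),
      g ∈ (pKer T.adjoint ⊓ pKer S)ᗮ →
      ‖g‖ ^ 2 ≤ C ^ 2 * (‖T.adjoint ⟨g, hg1⟩‖ ^ 2 + ‖S ⟨g, hg2⟩‖ ^ 2))
    (hC : 0 ≤ C)
    {h : H2} (hhS : h ∈ pKer S) (hhperp : h ∈ (pKer T.adjoint)ᗮ)
    (y : H2) (hy : y ∈ T.adjoint.domain) :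
    |⟪h, y⟫| ≤ C * ‖h‖ * ‖T.adjoint ⟨y, hy⟩‖ := by
  haveI : CompleteSpace (pKer S : Submodule ℝ H2) :=
    (pKer_isClosed_of_graph S hSclosed).completeSpace_coe
  haveI : CompleteSpace (pKer T.adjoint ⊓ pKer S : Submodule ℝ H2) :=
    (N_isClosed T S hTdense hSclosed).completeSpace_coe
  set y₁ : H2 := (Submodule.orthogonalProjectionOnto (pKer S) y : H2) with hy₁def
  set y₂ : H2 := y - y₁ with hy₂def
  have hy₂perp : y₂ ∈ (pKer S)ᗮ := Submodule.sub_starProjection_mem_orthogonal (K := pKer S) y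
  have hy₂ker : y₂ ∈ pKer T.adjoint := perpKerS_le_pKer_adjoint T S hTdense hrange hy₂perp
  have hy₁S : y₁ ∈ pKer S := (Submodule.orthogonalProjectionOnto (pKer S) y).2
  obtain ⟨hy₂dom, hy₂zero⟩ := mem_pKer_elim hy₂ker
  have hy₁dom : y₁ ∈ T.adjoint.domain := by
    have : y₁ = y - y₂ := by rw [hy₂def]; abel
    rw [this]
    exact T.adjoint.domain.sub_mem hy hy₂dom
  have hy₁val : T.adjoint ⟨y₁, hy₁dom⟩ = T.adjoint ⟨y, hy⟩ := by
    have he : y₁ = y - y₂ := by rw [hy₂def]; abel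
    have : T.adjoint ⟨y - y₂, he ▸ hy₁dom⟩ = T.adjoint ⟨y, hy⟩ - T.adjoint ⟨y₂, hy₂dom⟩ :=
      pmap_sub_apply T.adjoint hy hy₂dom _
    rw [hy₂zero, sub_zero] at this
    rw [← this]
    congr 1
    exact Subtype.ext he
  -- now project y₁ onto N
  set n : H2 := (Submodule.orthogonalProjectionOnto (pKer T.adjoint ⊓ pKer S) y₁ : H2) with hndef
  set h' : H2 := y₁ - n with h'def
  have hnN : n ∈ pKer T.adjoint ⊓ pKer S :=
    (Submodule.orthogonalProjectionOnto (pKer T.adjoint ⊓ pKer S) y₁).2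
  have h'perp : h' ∈ (pKer T.adjoint ⊓ pKer S)ᗮ :=
    Submodule.sub_starProjection_mem_orthogonal (K := pKer T.adjoint ⊓ pKer S) y₁
  have hnT : n ∈ pKer T.adjoint := (Submodule.mem_inf.mp hnN).1
  have hnS : n ∈ pKer S := (Submodule.mem_inf.mp hnN).2
  obtain ⟨hndom, hnzero⟩ := mem_pKer_elim hnT
  have h'S : h' ∈ pKer S := (pKer S).sub_mem hy₁S hnS
  obtain ⟨h'Sdom, h'Szero⟩ := mem_pKer_elim h'S
  have h'dom : h' ∈ T.adjoint.domain := T.adjoint.domain.sub_mem hy₁dom hndom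
  have h'val : T.adjoint ⟨h', h'dom⟩ = T.adjoint ⟨y, hy⟩ := by
    have hmem : y₁ - n ∈ T.adjoint.domain := h'def ▸ h'dom
    have hsub := pmap_sub_apply T.adjoint hy₁dom hndom hmem
    rw [hnzero, sub_zero, hy₁val] at hsub
    rw [← hsub]
  have h'est : ‖h'‖ ≤ C * ‖T.adjoint ⟨y, hy⟩‖ := by
    have := hest h' h'dom h'Sdom h'perp
    rw [h'val, h'Szero, norm_zero] at this
    have hn1 : (0:ℝ) ≤ ‖h'‖ := norm_nonneg _
    have hn2 : (0:ℝ) ≤ C * ‖T.adjoint ⟨y, hy⟩‖ := by positivity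
    nlinarith [this]
  -- decompose the inner product
  have hdecomp : ⟪h, y⟫ = ⟪h, h'⟫ := by
    have hy' : y = y₂ + n + h' := by rw [h'def, hy₂def]; abel
    rw [hy', inner_add_right, inner_add_right]
    have h1 : ⟪h, y₂⟫ = 0 := (Submodule.mem_orthogonal' _ h).mp hhperp y₂ hy₂ker
    have h2 : ⟪h, n⟫ = 0 := (Submodule.mem_orthogonal' _ h).mp hhperp n hnT
    rw [h1, h2, zero_add, zero_add]
  rw [hdecomp]
  calc |⟪h, h'⟫| ≤ ‖h‖ * ‖h'‖ := abs_real_inner_le_norm h h'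
    _ ≤ ‖h‖ * (C * ‖T.adjoint ⟨y, hy⟩‖) := by
        apply mul_le_mul_of_nonneg_left h'est (norm_nonneg _)
    _ = C * ‖h‖ * ‖T.adjoint ⟨y, hy⟩‖ := by ring

/-- (E) an element of `Ker S` orthogonal to `N` is orthogonal to all of `Ker T†`. -/
theorem perp_of_perpN (T : H1 →ₗ.[ℝ] H2) (S : H2 →ₗ.[ℝ] H3)
    (hTdense : Dense (T.domain : Set H1)) (hSclosed : IsClosed (S.graph : Set (H2 × H3)))
    (hrange : LinearMap.range T.toFun ≤ pKer S)
    {h : H2} (hhS : h ∈ pKer S) (hhperp : h ∈ (pKer T.adjoint ⊓ pKer S)ᗮ) :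
    h ∈ (pKer T.adjoint)ᗮ := by
  haveI : CompleteSpace (pKer S : Submodule ℝ H2) :=
    (pKer_isClosed_of_graph S hSclosed).completeSpace_coe
  rw [Submodule.mem_orthogonal']
  intro z hz
  set zs : H2 := (Submodule.orthogonalProjectionOnto (pKer S) z : H2) with hzs
  set z' : H2 := z - zs with hz'
  have hz'perp : z' ∈ (pKer S)ᗮ := Submodule.sub_starProjection_mem_orthogonal (K := pKer S) z
  have hz'T : z' ∈ pKer T.adjoint := perpKerS_le_pKer_adjoint T S hTdense hrange hz'perp
  have hzsS : zs ∈ pKer S := (Submodule.orthogonalProjectionOnto (pKer S) z).2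
  have hzsT : zs ∈ pKer T.adjoint := by
    have : zs = z - z' := by rw [hz']; abel
    rw [this]
    exact (pKer T.adjoint).sub_mem hz hz'T
  have hzsN : zs ∈ pKer T.adjoint ⊓ pKer S := Submodule.mem_inf.mpr ⟨hzsT, hzsS⟩
  have hzdecomp : z = zs + z' := by rw [hz']; abel
  rw [hzdecomp, inner_add_right]
  have h1 : ⟪h, zs⟫ = 0 := (Submodule.mem_orthogonal' _ h).mp hhperp zs hzsN
  have h2 : ⟪h, z'⟫ = 0 := (Submodule.mem_orthogonal _ z').mp hz'perp h hhS
  rw [h1, h2, add_zero]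

end Aux5
section Aux6
variable {H1 H2 H3 : Type*}
    [NormedAddCommGroup H1] [InnerProductSpace ℝ H1] [CompleteSpace H1]
    [NormedAddCommGroup H2] [InnerProductSpace ℝ H2] [CompleteSpace H2]
    [NormedAddCommGroup H3] [InnerProductSpace ℝ H3] [CompleteSpace H3]

/-- (D) surjectivity: an element of `Ker S ∩ (Ker T†)ᗮ` is in the range of `T`. -/
theorem mem_range_of_perp (T : H1 →ₗ.[ℝ] H2) (S : H2 →ₗ.[ℝ] H3)
    (hTdense : Dense (T.domain : Set H1)) (hTclosed : IsClosed (T.graph : Set (H1 × H2)))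
    (hSclosed : IsClosed (S.graph : Set (H2 × H3)))
    (hrange : LinearMap.range T.toFun ≤ pKer S)
    {C : ℝ}
    (hest : ∀ (g : H2) (hg1 : g ∈ T.adjoint.domain) (hg2 : g ∈ S.domain),
      g ∈ (pKer T.adjoint ⊓ pKer S)ᗮ →
      ‖g‖ ^ 2 ≤ C ^ 2 * (‖T.adjoint ⟨g, hg1⟩‖ ^ 2 + ‖S ⟨g, hg2⟩‖ ^ 2))
    (hC : 0 ≤ C)
    {h : H2} (hhS : h ∈ pKer S) (hhperp : h ∈ (pKer T.adjoint)ᗮ) :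
    h ∈ LinearMap.range T.toFun := by
  classical
  set Af : T.adjoint.domain →ₗ[ℝ] H1 := T.adjoint.toFun with hAf
  set R : Submodule ℝ H1 := LinearMap.range Af with hR
  set φ : T.adjoint.domain →ₗ[ℝ] ℝ := (innerₛₗ ℝ h).comp T.adjoint.domain.subtype with hφ
  have hφ_apply : ∀ y : T.adjoint.domain, φ y = ⟪h, (y : H2)⟫ := fun y => rfl
  have hker : LinearMap.ker Af ≤ LinearMap.ker φ := by
    intro y hy
    rw [LinearMap.mem_ker] at hy ⊢
    rw [hφ_apply]
    have hyk : (y : H2) ∈ pKer T.adjoint := mem_pKer_intro y.2 (by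
      have : T.adjoint ⟨(y : H2), y.2⟩ = Af y := rfl
      rw [this, hy])
    exact (Submodule.mem_orthogonal' _ h).mp hhperp _ hyk
  set f₀ : R →ₗ[ℝ] ℝ :=
    ((LinearMap.ker Af).liftQ φ hker).comp Af.quotKerEquivRange.symm.toLinearMap with hf₀
  have hf₀_apply : ∀ (y : T.adjoint.domain) (hm : Af y ∈ R), f₀ ⟨Af y, hm⟩ = ⟪h, (y : H2)⟫ := by
    intro y hm
    have h1 : Af.quotKerEquivRange.symm ⟨Af y, hm⟩ = (LinearMap.ker Af).mkQ y :=
      Af.quotKerEquivRange_symm_apply_image y hm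
    rw [hf₀, LinearMap.comp_apply, LinearEquiv.coe_toLinearMap, h1]
    exact Submodule.liftQ_apply _ φ y
  have hbound : ∀ r : R, ‖f₀ r‖ ≤ (C * ‖h‖) * ‖r‖ := by
    rintro ⟨r, hr⟩
    obtain ⟨y, rfl⟩ := hr
    rw [hf₀_apply y ⟨y, rfl⟩]
    have hb := key_bound T S hTdense hSclosed hrange hest hC hhS hhperp (y : H2) y.2
    have : T.adjoint ⟨(y : H2), y.2⟩ = Af y := by
      congr
    rw [this] at hb
    have hnr : ‖(⟨Af y, ⟨y, rfl⟩⟩ : R)‖ = ‖Af y‖ := rfl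
    rw [Real.norm_eq_abs, hnr]
    exact hb
  set F : R →L[ℝ] ℝ := f₀.mkContinuous (C * ‖h‖) hbound with hF
  obtain ⟨G, hGext, -⟩ := exists_extension_norm_eq R F
  set u : H1 := (InnerProductSpace.toDual ℝ H1).symm G with hu
  have hukey : ∀ (y : H2) (hy : y ∈ T.adjoint.domain), ⟪u, T.adjoint ⟨y, hy⟩⟫ = ⟪h, y⟫ := by
    intro y hy
    have h1 : ⟪u, T.adjoint ⟨y, hy⟩⟫ = G (T.adjoint ⟨y, hy⟩) :=
      InnerProductSpace.toDual_symm_apply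
    have hmem : T.adjoint ⟨y, hy⟩ ∈ R := ⟨⟨y, hy⟩, rfl⟩
    have h2 : G (T.adjoint ⟨y, hy⟩) = F ⟨T.adjoint ⟨y, hy⟩, hmem⟩ := hGext ⟨T.adjoint ⟨y, hy⟩, hmem⟩
    have h3 : F (⟨T.adjoint ⟨y, hy⟩, hmem⟩ : R) = f₀ ⟨T.adjoint ⟨y, hy⟩, hmem⟩ := rfl
    rw [h1, h2, h3]
    exact hf₀_apply ⟨y, hy⟩ hmem
  obtain ⟨hudom, hTu⟩ := mem_graph_of_forall_adjoint T hTdense hTclosed u h hukey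
  exact ⟨⟨u, hudom⟩, hTu⟩

end Aux6

/-- Hörmander's compactness lemma (Theorems 1.1.2/1.1.3 in [H1]): if from every
bounded sequence `g_ν ∈ Dom T* ∩ Dom S` with `T* g_ν → 0` and `S g_ν → 0` one can
extract a strongly convergent subsequence, then `Ker T* ∩ Ker S` is finite
dimensional, the estimate `‖g‖² ≤ C²(‖T* g‖² + ‖S g‖²)` holds on the orthogonal
complement of `Ker T* ∩ Ker S`, and `Ker S = (Ker T* ∩ Ker S) ⊕ Im T`
orthogonally. -/
theorem stmt18 {H1 H2 H3 : Type*}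
    [NormedAddCommGroup H1] [InnerProductSpace ℝ H1] [CompleteSpace H1]
    [NormedAddCommGroup H2] [InnerProductSpace ℝ H2] [CompleteSpace H2]
    [NormedAddCommGroup H3] [InnerProductSpace ℝ H3] [CompleteSpace H3]
    (T : H1 →ₗ.[ℝ] H2) (S : H2 →ₗ.[ℝ] H3)
    (hTdense : Dense (T.domain : Set H1)) (hTclosed : IsClosed (T.graph : Set (H1 × H2)))
    (hSdense : Dense (S.domain : Set H2)) (hSclosed : IsClosed (S.graph : Set (H2 × H3)))
    (hST : ∀ x : T.domain, ∃ h : (T x : H2) ∈ S.domain, S ⟨T x, h⟩ = 0)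
    (hcpt : ∀ (g : ℕ → H2) (hgT : ∀ k, g k ∈ T.adjoint.domain)
      (hgS : ∀ k, g k ∈ S.domain),
      (∃ B, ∀ k, ‖g k‖ ≤ B) →
      Tendsto (fun k => T.adjoint ⟨g k, hgT k⟩) atTop (nhds 0) →
      Tendsto (fun k => S ⟨g k, hgS k⟩) atTop (nhds 0) →
      ∃ (φ : ℕ → ℕ) (x : H2), StrictMono φ ∧ Tendsto (g ∘ φ) atTop (nhds x)) :
    FiniteDimensional ℝ (pKer T.adjoint ⊓ pKer S : Submodule ℝ H2) ∧
    (∃ C > (0 : ℝ), ∀ (g : H2) (hg1 : g ∈ T.adjoint.domain) (hg2 : g ∈ S.domain),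
      g ∈ (pKer T.adjoint ⊓ pKer S)ᗮ →
      ‖g‖ ^ 2 ≤ C ^ 2 * (‖T.adjoint ⟨g, hg1⟩‖ ^ 2 + ‖S ⟨g, hg2⟩‖ ^ 2)) ∧
    pKer S = (pKer T.adjoint ⊓ pKer S) ⊔ LinearMap.range T.toFun ∧
    (∀ x ∈ pKer T.adjoint ⊓ pKer S, ∀ y ∈ LinearMap.range T.toFun, ⟪x, y⟫ = 0) := by
  have hrange : LinearMap.range T.toFun ≤ pKer S := by
    rintro y ⟨u, rfl⟩
    exact mem_pKer_intro (hST u).choose (hST u).choose_spec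
  obtain ⟨C, hCpos, hest⟩ := part2 T S hTdense hSclosed hcpt
  refine ⟨part1 T S hTdense hSclosed hcpt, ⟨C, hCpos, hest⟩, ?_, ?_⟩
  · apply le_antisymm
    · intro g hg
      haveI : CompleteSpace (pKer T.adjoint ⊓ pKer S : Submodule ℝ H2) :=
        (N_isClosed T S hTdense hSclosed).completeSpace_coe
      set n : H2 := (Submodule.orthogonalProjectionOnto (pKer T.adjoint ⊓ pKer S) g : H2) with hn
      have hnN : n ∈ pKer T.adjoint ⊓ pKer S :=
        (Submodule.orthogonalProjectionOnto (pKer T.adjoint ⊓ pKer S) g).2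
      have hh : g - n ∈ (pKer T.adjoint ⊓ pKer S)ᗮ :=
        Submodule.sub_starProjection_mem_orthogonal (K := pKer T.adjoint ⊓ pKer S) g
      have hhS : g - n ∈ pKer S := (pKer S).sub_mem hg (Submodule.mem_inf.mp hnN).2
      have hhperp := perp_of_perpN T S hTdense hSclosed hrange hhS hh
      have hhrange := mem_range_of_perp T S hTdense hTclosed hSclosed hrange hest
        hCpos.le hhS hhperp
      rw [Submodule.mem_sup]
      exact ⟨n, hnN, g - n, hhrange, by abel⟩
    · exact sup_le inf_le_right hrange
  · rintro x hx y ⟨u, rfl⟩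
    obtain ⟨hxd, hx0⟩ := mem_pKer_elim (Submodule.mem_inf.mp hx).1
    have hfa := T.adjoint_isFormalAdjoint hTdense ⟨x, hxd⟩ u
    rw [hx0, inner_zero_left] at hfa
    exact hfa.symm
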